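/- Let $h: \mathbb{R}\to\mathbb{R}$ be Lipschitz, $\tilde\Gamma$ an $(n+N)\times(n+N)$ complex matrix, and for an $n\times N$ complex matrix $B$ define the Hermitian matrix $\mathcal{M}(B) = \begin{pmatrix} 0_{n\times n} & B \\ B^* & 0_{N\times N}\end{pmatrix}$. Then the map $B \mapsto \mathrm{Tr}[h(\mathcal{M}(B))\tilde\Gamma]$, viewed as a function of the real variables $(\Re B_{ij}, \Im B_{ij})$, is Lipschitz with constant at most $\sqrt{2}\,\|\tilde\Gamma\|_2\, \|h\|_{Lip}$. -/

import Mathlib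

open Matrix

/-- The Hilbert–Schmidt norm of a complex matrix. -/
noncomputable def hsNorm {m n : Type*} [Fintype m] [Fintype n] (B : Matrix m n ℂ) : ℝ :=
  Real.sqrt (∑ i, ∑ j, ‖B i j‖ ^ 2)

/-- The Hermitian dilation `𝓜(B) = [[0, B], [B^*, 0]]` of a rectangular matrix `B`. -/
def mcal {n N : ℕ} (B : Matrix (Fin n) (Fin N) ℂ) :
    Matrix (Fin n ⊕ Fin N) (Fin n ⊕ Fin N) ℂ :=
  Matrix.fromBlocks 0 B Bᴴ 0

theorem mcal_isHermitian {n N : ℕ} (B : Matrix (Fin n) (Fin N) ℂ) :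
    (mcal B).IsHermitian := by
  simp [mcal, Matrix.IsHermitian, Matrix.fromBlocks_conjTranspose]

/-! ### Auxiliary material: the squared Hilbert–Schmidt norm `Q` -/

noncomputable def Q {p q : Type*} [Fintype p] [Fintype q] (X : Matrix p q ℂ) : ℝ :=
  ∑ i, ∑ j, ‖X i j‖ ^ 2

lemma Q_nonneg {p q : Type*} [Fintype p] [Fintype q] (X : Matrix p q ℂ) : 0 ≤ Q X := by
  apply Finset.sum_nonneg; intro i _; apply Finset.sum_nonneg; intro j _; positivity

lemma Q_eq_re_trace {p q : Type*} [Fintype p] [Fintype q] (X : Matrix p q ℂ) :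
    Q X = ((Xᴴ * X).trace).re := by
  simp only [Q, Matrix.trace, Matrix.diag, Matrix.mul_apply, Matrix.conjTranspose_apply]
  rw [Complex.re_sum, Finset.sum_comm]
  congr 1; ext i
  rw [Complex.re_sum]
  congr 1; ext j
  rw [Complex.sq_norm]
  simp [Complex.normSq_apply, Complex.mul_re]

lemma Q_mul_left {p q : Type*} [Fintype p] [Fintype q] [DecidableEq p] (U : Matrix p p ℂ)
    (hU : Uᴴ * U = 1) (X : Matrix p q ℂ) : Q (U * X) = Q X := by
  rw [Q_eq_re_trace, Q_eq_re_trace]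
  congr 2
  rw [conjTranspose_mul, Matrix.mul_assoc, ← Matrix.mul_assoc Uᴴ, hU, Matrix.one_mul]

lemma Q_mul_right {p q : Type*} [Fintype p] [Fintype q] [DecidableEq q] (X : Matrix p q ℂ)
    (V : Matrix q q ℂ) (hV : V * Vᴴ = 1) : Q (X * V) = Q X := by
  rw [Q_eq_re_trace, Q_eq_re_trace]
  congr 1
  rw [conjTranspose_mul, Matrix.mul_assoc, Matrix.trace_mul_comm Vᴴ,
    Matrix.mul_assoc, Matrix.mul_assoc, hV, Matrix.mul_one]

lemma Q_diag_comm {ι : Type*} [Fintype ι] [DecidableEq ι] (g g' : ι → ℝ) (S : Matrix ι ι ℂ) :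
    Q (diagonal (Complex.ofReal ∘ g) * S - S * diagonal (Complex.ofReal ∘ g')) =
      ∑ i, ∑ j, (g i - g' j) ^ 2 * ‖S i j‖ ^ 2 := by
  unfold Q
  congr 1; ext i; congr 1; ext j
  rw [Matrix.sub_apply, Matrix.diagonal_mul, Matrix.mul_diagonal]
  have : (Complex.ofReal ∘ g) i * S i j - S i j * (Complex.ofReal ∘ g') j
      = ((g i - g' j : ℝ) : ℂ) * S i j := by simp; ring
  rw [this, norm_mul, mul_pow, Complex.norm_real, Real.norm_eq_abs, sq_abs]

/-- Key lemma: the functional calculus of a Lipschitz function is Lipschitz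
in the (squared) Hilbert–Schmidt norm. -/
lemma Q_cfc_sub_le {ι : Type*} [Fintype ι] [DecidableEq ι] {A A' : Matrix ι ι ℂ}
    (hA : A.IsHermitian) (hA' : A'.IsHermitian) (f : ℝ → ℝ) (L : NNReal)
    (hf : LipschitzWith L f) :
    Q (hA.cfc f - hA'.cfc f) ≤ (L : ℝ) ^ 2 * Q (A - A') := by
  set U := (hA.eigenvectorUnitary : Matrix ι ι ℂ) with hUdef
  set V := (hA'.eigenvectorUnitary : Matrix ι ι ℂ) with hVdef
  have hU1 : Uᴴ * U = 1 := by
    rw [← Matrix.star_eq_conjTranspose]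
    exact Matrix.mem_unitaryGroup_iff'.mp hA.eigenvectorUnitary.2
  have hU2 : U * Uᴴ = 1 := by
    rw [← Matrix.star_eq_conjTranspose]
    exact Matrix.mem_unitaryGroup_iff.mp hA.eigenvectorUnitary.2
  have hV1 : Vᴴ * V = 1 := by
    rw [← Matrix.star_eq_conjTranspose]
    exact Matrix.mem_unitaryGroup_iff'.mp hA'.eigenvectorUnitary.2
  have hV2 : V * Vᴴ = 1 := by
    rw [← Matrix.star_eq_conjTranspose]
    exact Matrix.mem_unitaryGroup_iff.mp hA'.eigenvectorUnitary.2
  set S := Uᴴ * V with hSdef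
  have sandwich : ∀ D₁ D₂ : Matrix ι ι ℂ,
      U * D₁ * Uᴴ - V * D₂ * Vᴴ = U * (D₁ * S - S * D₂) * Vᴴ := by
    intro D₁ D₂
    simp only [hSdef, Matrix.mul_sub, Matrix.sub_mul, ← Matrix.mul_assoc]
    rw [Matrix.mul_assoc (U * D₁ * Uᴴ) V Vᴴ, hV2, Matrix.mul_one]
    rw [hU2, Matrix.one_mul]
  have QS : ∀ D₁ D₂ : Matrix ι ι ℂ, Q (U * (D₁ * S - S * D₂) * Vᴴ) = Q (D₁ * S - S * D₂) := by
    intro D₁ D₂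
    rw [Q_mul_right _ Vᴴ (by rw [conjTranspose_conjTranspose]; exact hV1), Q_mul_left U hU1]
  have h1 : hA.cfc f - hA'.cfc f =
      U * diagonal (Complex.ofReal ∘ (f ∘ hA.eigenvalues)) * Uᴴ -
      V * diagonal (Complex.ofReal ∘ (f ∘ hA'.eigenvalues)) * Vᴴ := rfl
  have h2 : A - A' = U * diagonal (Complex.ofReal ∘ hA.eigenvalues) * Uᴴ -
      V * diagonal (Complex.ofReal ∘ hA'.eigenvalues) * Vᴴ := by
    conv_lhs => rw [hA.spectral_theorem, hA'.spectral_theorem]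
    rfl
  rw [h1, h2, sandwich, sandwich, QS, QS, Q_diag_comm, Q_diag_comm, Finset.mul_sum]
  apply Finset.sum_le_sum; intro i _
  rw [Finset.mul_sum]
  apply Finset.sum_le_sum; intro j _
  simp only [Function.comp]
  have hd := hf.dist_le_mul (hA.eigenvalues i) (hA'.eigenvalues j)
  rw [Real.dist_eq, Real.dist_eq] at hd
  have h3 : (f (hA.eigenvalues i) - f (hA'.eigenvalues j)) ^ 2 ≤
      (L : ℝ) ^ 2 * (hA.eigenvalues i - hA'.eigenvalues j) ^ 2 := by
    calc (f (hA.eigenvalues i) - f (hA'.eigenvalues j)) ^ 2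
        = |f (hA.eigenvalues i) - f (hA'.eigenvalues j)| ^ 2 := (sq_abs _).symm
      _ ≤ ((L : ℝ) * |hA.eigenvalues i - hA'.eigenvalues j|) ^ 2 := by
          apply pow_le_pow_left₀ (abs_nonneg _) hd
      _ = (L : ℝ) ^ 2 * (hA.eigenvalues i - hA'.eigenvalues j) ^ 2 := by
          rw [mul_pow, sq_abs]
  calc (f (hA.eigenvalues i) - f (hA'.eigenvalues j)) ^ 2 * ‖S i j‖ ^ 2
      ≤ ((L : ℝ) ^ 2 * (hA.eigenvalues i - hA'.eigenvalues j) ^ 2) * ‖S i j‖ ^ 2 :=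
        mul_le_mul_of_nonneg_right h3 (by positivity)
    _ = (L : ℝ) ^ 2 * ((hA.eigenvalues i - hA'.eigenvalues j) ^ 2 * ‖S i j‖ ^ 2) := by
        ring

lemma mcal_sub {n N : ℕ} (B B' : Matrix (Fin n) (Fin N) ℂ) :
    mcal B - mcal B' = mcal (B - B') := by
  ext (i | i) (j | j) <;> simp [mcal]

lemma Q_mcal {n N : ℕ} (X : Matrix (Fin n) (Fin N) ℂ) : Q (mcal X) = 2 * Q X := by
  simp only [Q, mcal, Fintype.sum_sum_type, Matrix.fromBlocks_apply₁₁,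
    Matrix.fromBlocks_apply₁₂, Matrix.fromBlocks_apply₂₁, Matrix.fromBlocks_apply₂₂,
    Matrix.zero_apply, map_zero, Matrix.conjTranspose_apply, Complex.star_def,
    Complex.norm_conj, norm_zero, ne_eq, OfNat.ofNat_ne_zero, not_false_eq_true, zero_pow,
    Finset.sum_const_zero, zero_add, add_zero]
  have hswap := Finset.sum_comm (s := (Finset.univ : Finset (Fin N)))
    (t := (Finset.univ : Finset (Fin n))) (f := fun x y => ‖X y x‖ ^ 2)
  rw [hswap]; ring

lemma abs_trace_mul_le {ι : Type*} [Fintype ι] (X G : Matrix ι ι ℂ) :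
    ‖(X * G).trace‖ ≤ Real.sqrt (Q X) * Real.sqrt (Q G) := by
  set T := ∑ i, ∑ j, ‖X i j‖ * ‖G j i‖ with hT
  have hT0 : 0 ≤ T := by
    apply Finset.sum_nonneg; intro i _; apply Finset.sum_nonneg; intro j _; positivity
  have h1 : ‖(X * G).trace‖ ≤ T := by
    rw [Matrix.trace]
    calc ‖∑ i, (X * G).diag i‖
        ≤ ∑ i, ‖(X * G).diag i‖ := norm_sum_le _ _
      _ ≤ T := by
          apply Finset.sum_le_sum; intro i _
          rw [Matrix.diag_apply, Matrix.mul_apply]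
          calc ‖∑ j, X i j * G j i‖
              ≤ ∑ j, ‖X i j * G j i‖ := norm_sum_le _ _
            _ = ∑ j, ‖X i j‖ * ‖G j i‖ := by
                simp [norm_mul]
  have h2 : T ^ 2 ≤ Q X * Q G := by
    have := Finset.sum_mul_sq_le_sq_mul_sq (Finset.univ : Finset (ι × ι))
      (fun p => ‖X p.1 p.2‖) (fun p => ‖G p.2 p.1‖)
    simpa [hT, Q, Fintype.sum_prod_type, mul_pow,
      Finset.sum_comm (f := fun (p1 p2 : ι) => ‖G p2 p1‖ ^ 2)] using this
  calc ‖(X * G).trace‖ ≤ T := h1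
    _ = Real.sqrt (T ^ 2) := by rw [Real.sqrt_sq hT0]
    _ ≤ Real.sqrt (Q X * Q G) := Real.sqrt_le_sqrt h2
    _ = Real.sqrt (Q X) * Real.sqrt (Q G) := Real.sqrt_mul (Q_nonneg X) _

lemma hsNorm_eq {m n : Type*} [Fintype m] [Fintype n] (B : Matrix m n ℂ) :
    hsNorm B = Real.sqrt (Q B) := rfl

/-- The map `B ↦ Tr[h(𝓜(B)) Γ̃]`, as a function of the real and imaginary parts of the
entries of `B` (whose Euclidean norm is the Hilbert–Schmidt norm of `B`), is Lipschitz with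
constant at most `√2 ‖Γ̃‖₂ ‖h‖_Lip`. -/
theorem trace_funcCalc_lipschitz {n N : ℕ} (h : ℝ → ℝ) (L : NNReal)
    (hh : LipschitzWith L h) (Γ : Matrix (Fin n ⊕ Fin N) (Fin n ⊕ Fin N) ℂ)
    (B B' : Matrix (Fin n) (Fin N) ℂ) :
    ‖Matrix.trace ((mcal_isHermitian B).cfc h * Γ) -
        Matrix.trace ((mcal_isHermitian B').cfc h * Γ)‖ ≤
      Real.sqrt 2 * hsNorm Γ * (L : ℝ) * hsNorm (B - B') := by
  set X := (mcal_isHermitian B).cfc h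
  set X' := (mcal_isHermitian B').cfc h
  have key : Q (X - X') ≤ (L : ℝ) ^ 2 * (2 * Q (B - B')) := by
    calc Q (X - X') ≤ (L : ℝ) ^ 2 * Q (mcal B - mcal B') :=
          Q_cfc_sub_le (mcal_isHermitian B) (mcal_isHermitian B') h L hh
      _ = (L : ℝ) ^ 2 * (2 * Q (B - B')) := by rw [mcal_sub, Q_mcal]
  have hsq : Real.sqrt (Q (X - X')) ≤ (L : ℝ) * (Real.sqrt 2 * Real.sqrt (Q (B - B'))) := by
    calc Real.sqrt (Q (X - X')) ≤ Real.sqrt ((L : ℝ) ^ 2 * (2 * Q (B - B'))) :=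
          Real.sqrt_le_sqrt key
      _ = (L : ℝ) * (Real.sqrt 2 * Real.sqrt (Q (B - B'))) := by
          rw [Real.sqrt_mul (by positivity), Real.sqrt_sq L.coe_nonneg,
            Real.sqrt_mul (by norm_num)]
  calc ‖(X * Γ).trace - (X' * Γ).trace‖
      = ‖((X - X') * Γ).trace‖ := by rw [Matrix.sub_mul, Matrix.trace_sub]
    _ ≤ Real.sqrt (Q (X - X')) * Real.sqrt (Q Γ) := abs_trace_mul_le _ _
    _ ≤ ((L : ℝ) * (Real.sqrt 2 * Real.sqrt (Q (B - B')))) * Real.sqrt (Q Γ) :=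
        mul_le_mul_of_nonneg_right hsq (Real.sqrt_nonneg _)
    _ = Real.sqrt 2 * hsNorm Γ * (L : ℝ) * hsNorm (B - B') := by
        rw [hsNorm_eq, hsNorm_eq]; ring
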